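/- Rectangle relation (Corollary 3.4): Let R be a commutative ring, N a positive integer, U an N×N upper unitriangular matrix over R, and p, q ≥ 1, r integers with p+1 ≤ r−1 and q+1 ≤ N−r. Denote by [m|n] the rectangular partition (n^m). Then S^{(r)}_{[p+1|q]}(U) · S^{(r−1)}_{[p−1|q]}(U) = S^{(r)}_{[p|q]}(U) · S^{(r−1)}_{[p|q]}(U) − S^{(r)}_{[p|q−1]}(U) · S^{(r−1)}_{[p|q+1]}(U). -/

import Mathlib

open Matrix BigOperators Finset Filter

/-- Extend a `Fin N`-indexed matrix to `ℕ` indices by zero. -/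
def matExt {R : Type*} [Zero R] {N : ℕ} (U : Matrix (Fin N) (Fin N) R) : ℕ → ℕ → R :=
  fun i j => if hi : i < N then (if hj : j < N then U ⟨i, hi⟩ ⟨j, hj⟩ else 0) else 0

/-- `U` is upper unitriangular. -/
def UpperUni {R : Type*} [Zero R] [One R] {N : ℕ} (U : Matrix (Fin N) (Fin N) R) : Prop :=
  (∀ i, U i i = 1) ∧ ∀ i j : Fin N, (j : ℕ) < (i : ℕ) → U i j = 0

/-- `L` is lower unitriangular. -/
def LowerUni {R : Type*} [Zero R] [One R] {N : ℕ} (L : Matrix (Fin N) (Fin N) R) : Prop :=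
  (∀ i, L i i = 1) ∧ ∀ i j : Fin N, (i : ℕ) < (j : ℕ) → L i j = 0

/-- 0-based entries of the Maya diagram `J(λ;r)` (the `a`-th smallest element, minus 1):
for `a = 0,…,r-1` this is `λ_{r-a} + a` (with `λ` 0-based). -/
def maya (lam : ℕ → ℕ) (r : ℕ) (a : Fin r) : ℕ := lam (r - 1 - (a : ℕ)) + (a : ℕ)

/-- The ninth variation of the skew Schur function `S^{(r)}_{λ/μ}(U)`:
the minor of `U` on rows `J(μ;r)` and columns `J(λ;r)`. -/
def SchurV {R : Type*} [CommRing R] {N : ℕ} (U : Matrix (Fin N) (Fin N) R)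
    (r : ℕ) (lam mu : ℕ → ℕ) : R :=
  Matrix.det (Matrix.of fun i j : Fin r => matExt U (maya mu r i) (maya lam r j))

/-- Conjugate partition (0-based), counting parts among indices `< B`. -/
def conjF (f : ℕ → ℕ) (B : ℕ) : ℕ → ℕ :=
  fun i => ((Finset.range B).filter fun j => i + 1 ≤ f j).card

/-- The hook partition `(a+1, 1^b)` (0-based function). -/
def hookP (a b : ℕ) : ℕ → ℕ := fun k => if k = 0 then a + 1 else if k ≤ b then 1 else 0

/-- `h^{(r)}_d(U) = S^{(r)}_{(d)}(U)`, zero for `d < 0`. -/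
def hSV {R : Type*} [CommRing R] {N : ℕ} (U : Matrix (Fin N) (Fin N) R) (r : ℕ) (d : ℤ) : R :=
  if 0 ≤ d then SchurV U r (fun k => if k = 0 then d.toNat else 0) (fun _ => 0) else 0

/-- `e^{(r)}_d(U) = S^{(r)}_{(1^d)}(U)`, zero for `d < 0`. -/
def eSV {R : Type*} [CommRing R] {N : ℕ} (U : Matrix (Fin N) (Fin N) R) (r : ℕ) (d : ℤ) : R :=
  if 0 ≤ d then SchurV U r (fun k => if k < d.toNat then 1 else 0) (fun _ => 0) else 0

/-- The partition with Frobenius coordinates `(a|b)` (all 0-based as functions). -/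
def frobP (p : ℕ) (a b : Fin p → ℕ) : ℕ → ℕ :=
  fun i => if h : i < p then a ⟨i, h⟩ + i + 1
    else (Finset.univ.filter fun j : Fin p => i < b j + (j : ℕ) + 1).card

/-- `f : ℕ → ℤ` is a partition of length `≤ B`. -/
def IsPartZ (B : ℕ) (f : ℕ → ℤ) : Prop :=
  (∀ i, f (i + 1) ≤ f i) ∧ (∀ i, 0 ≤ f i) ∧ (∀ i, B ≤ i → f i = 0)

/-- `lam/mu` is a skew partition (of length `≤ B`). -/
def IsSkewZ (B : ℕ) (lam mu : ℕ → ℤ) : Prop :=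
  IsPartZ B lam ∧ IsPartZ B mu ∧ ∀ i, mu i ≤ lam i

open Classical in
/-- `S^{(r)}_{λ/μ}(U)` with the convention that it is `0` if `λ/μ` is not a skew partition. -/
noncomputable def SchurVz {R : Type*} [CommRing R] {N : ℕ} (U : Matrix (Fin N) (Fin N) R)
    (r B : ℕ) (lam mu : ℕ → ℤ) : R :=
  if IsSkewZ B lam mu then SchurV U r (fun i => (lam i).toNat) (fun i => (mu i).toNat) else 0

open Classical in
/-- `S^{(r)}_{λ'/μ'}(U)` applied to the conjugates, with the zero convention. -/
noncomputable def SchurVzConj {R : Type*} [CommRing R] {N : ℕ} (U : Matrix (Fin N) (Fin N) R)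
    (r B : ℕ) (lam mu : ℕ → ℤ) : R :=
  if IsSkewZ B lam mu then
    SchurV U r (conjF (fun i => (lam i).toNat) B) (conjF (fun i => (mu i).toNat) B) else 0

/-- `lam/mu` is a skew partition (ℕ-valued version). -/
def IsSkewN (B : ℕ) (lam mu : ℕ → ℕ) : Prop :=
  (∀ i, lam (i + 1) ≤ lam i) ∧ (∀ i, mu (i + 1) ≤ mu i) ∧ (∀ i, mu i ≤ lam i) ∧
    (∀ i, B ≤ i → lam i = 0)

open Classical in
noncomputable def SchurVn {R : Type*} [CommRing R] {N : ℕ} (U : Matrix (Fin N) (Fin N) R)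
    (r B : ℕ) (lam mu : ℕ → ℕ) : R :=
  if IsSkewN B lam mu then SchurV U r lam mu else 0

/-- The rectangular partition `[m|n] = (n^m)`. -/
def rectP (m n : ℕ) : ℕ → ℕ := fun i => if i < m then n else 0

/-- `[m|n]^l = ((n+1)^l, n^{m-l})`. -/
def rectUpP (m n l : ℕ) : ℕ → ℕ := fun i => if i < l then n + 1 else if i < m then n else 0

/-- `[m|n]_k = (n^m, k)`. -/
def rectLowP (m n k : ℕ) : ℕ → ℕ := fun i => if i < m then n else if i = m then k else 0

/-- `E + c·E_{t,t+1}` (indices 0-based). -/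
def elemMat {R : Type*} [CommRing R] (N t : ℕ) (c : R) : Matrix (Fin N) (Fin N) R :=
  1 + Matrix.of (fun i j : Fin N => if (i : ℕ) = t ∧ (j : ℕ) = t + 1 then c else 0)

/-- `U = U_1 ⋯ U_M` with `U_k = (E + w_{k,1-r}E_{1,2}) ⋯ (E + w_{k,N-1-r}E_{N-1,N})`. -/
def UmatW {R : Type*} [CommRing R] (N M : ℕ) (r : ℤ) (w : ℕ → ℤ → R) :
    Matrix (Fin N) (Fin N) R :=
  ((List.range M).map fun k =>
    ((List.range (N - 1)).map fun t => elemMat N t (w (k + 1) ((t : ℤ) + 1 - r))).prod).prod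

/-- The partition `(m_1^{r_1} m_2^{r_2-r_1} ⋯ m_n^{r_n-r_{n-1}})` (corner data 0-based). -/
def stepPart (n : ℕ) (m rr : ℕ → ℕ) : ℕ → ℕ :=
  fun i =>
    if h : (((Finset.range n).filter fun j => i < rr j)).Nonempty then
      m (((Finset.range n).filter fun j => i < rr j).min' h)
    else 0

/-- `Add_{a,b}` (rows 1-based in `a`, `b`; the function argument is 0-based). -/
def AddOp (a b : ℕ) (k : ℕ → ℕ) : ℕ → ℕ := fun i =>
  if i + 1 ≤ a then k i
  else if i + 1 = a + 1 then k (a - 1)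
  else if i + 1 ≤ b + 1 then k (i - 1) + 1
  else k i

/-- `Rem_{a,b}`. -/
def RemOp (a b : ℕ) (k : ℕ → ℕ) : ℕ → ℕ := fun i =>
  if i + 1 < a then k i
  else if i + 1 ≤ b - 1 then k (i + 1) - 1
  else if i + 1 = b then k b
  else k i

/-- `op_{a 0, b 0} ∘ op_{a 1, b 1} ∘ ⋯ ∘ op_{a (t-1), b (t-1)}` applied to `k`. -/
def iterOp (op : ℕ → ℕ → (ℕ → ℕ) → ℕ → ℕ) (t : ℕ) (a b : ℕ → ℕ) (k : ℕ → ℕ) : ℕ → ℕ :=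
  (List.range t).foldr (fun i acc => op (a i) (b i) acc) k

/-- the `i`-th smallest element of a finite set of naturals (0-based). -/
def ascNth (s : Finset ℕ) (i : ℕ) : ℕ := (s.sort (· ≤ ·)).getD i 0

/-- The cells of the skew Young diagram `D(λ/μ)` (0-based, rows `< B`). -/
def cellsD (B : ℕ) (lam mu : ℕ → ℕ) : Finset (ℕ × ℕ) :=
  (Finset.range B ×ˢ Finset.range (lam 0 + 1)).filter fun p => mu p.1 ≤ p.2 ∧ p.2 < lam p.1

/-- Semistandardness: weakly increasing along rows, strictly increasing down columns. -/
def IsSSYT {M B : ℕ} {lam mu : ℕ → ℕ} (T : ↥(cellsD B lam mu) → Fin M) : Prop :=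
  (∀ c c' : ↥(cellsD B lam mu), c.val.1 = c'.val.1 → c.val.2 ≤ c'.val.2 → T c ≤ T c') ∧
  (∀ c c' : ↥(cellsD B lam mu), c.val.1 < c'.val.1 → c.val.2 = c'.val.2 → T c < T c')

open Classical in
/-- Sum over all semistandard tableaux of shape `λ/μ` with entries in `{1,…,M}` of
the product over cells `c` of `f (entry) c`. -/
noncomputable def tabSum {R : Type*} [CommRing R] (M B : ℕ) (lam mu : ℕ → ℕ)
    (f : ℕ → ℕ × ℕ → R) : R :=
  ∑ T ∈ Finset.univ.filter (fun T : ↥(cellsD B lam mu) → Fin M => IsSSYT T),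
    ∏ c : ↥(cellsD B lam mu), f ((T c : ℕ) + 1) c.val

/-- `M`-truncated Schur multiple zeta value for a general filling `s` of the diagram. -/
noncomputable def zetaTF (M B : ℕ) (lam mu : ℕ → ℕ) (s : ℕ × ℕ → ℂ) : ℂ :=
  tabSum M B lam mu fun k c => (k : ℂ) ^ (-(s c))

/-- `M`-truncated diagonally constant Schur multiple zeta value `ζ^M_{λ/μ}(a)`. -/
noncomputable def zetaT (M B : ℕ) (lam mu : ℕ → ℕ) (a : ℤ → ℂ) : ℂ :=
  zetaTF M B lam mu fun c => a ((c.2 : ℤ) - (c.1 : ℤ))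

open Classical in
/-- `ζ^M_{λ/μ}(a)` with the zero convention for non-skew shapes. -/
noncomputable def zetaZ (M B : ℕ) (lam mu : ℕ → ℤ) (a : ℤ → ℂ) : ℂ :=
  if IsSkewZ B lam mu then
    zetaT M B (fun i => (lam i).toNat) (fun i => (mu i).toNat) a else 0

open Classical in
/-- `ζ^M_{λ'/μ'}(a)` applied to conjugates, with the zero convention. -/
noncomputable def zetaZConj (M B : ℕ) (lam mu : ℕ → ℤ) (a : ℤ → ℂ) : ℂ :=
  if IsSkewZ B lam mu then
    zetaT M (lam 0).toNat (conjF (fun i => (lam i).toNat) B)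
      (conjF (fun i => (mu i).toNat) B) a
  else 0

open Classical in
/-- `M`-truncated multiple zeta-star value `ζ^{⋆,M}(s_0,…,s_{d-1})`. -/
noncomputable def zetaStarT (M d : ℕ) (s : ℕ → ℂ) : ℂ :=
  ∑ f ∈ Finset.univ.filter (fun f : Fin d → Fin M => ∀ i j : Fin d, i ≤ j → f i ≤ f j),
    ∏ i : Fin d, (((f i : ℕ) + 1 : ℕ) : ℂ) ^ (-(s i))

open Classical in
/-- `M`-truncated multiple zeta value `ζ^{M}(s_0,…,s_{d-1})`. -/
noncomputable def zetaMT (M d : ℕ) (s : ℕ → ℂ) : ℂ :=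
  ∑ f ∈ Finset.univ.filter (fun f : Fin d → Fin M => ∀ i j : Fin d, i < j → f i < f j),
    ∏ i : Fin d, (((f i : ℕ) + 1 : ℕ) : ℂ) ^ (-(s i))

/-- The Riemann zeta value `ζ(k) = Σ_{n ≥ 1} n^{-k}`. -/
noncomputable def zetaVal (k : ℕ) : ℂ := ∑' n : ℕ, ((n + 1 : ℕ) : ℂ) ^ (-(k : ℤ))

/-- `ζ^⋆(1,k) = Σ_{1 ≤ m ≤ n} m^{-1} n^{-k}`. -/
noncomputable def zetaStarOne (k : ℕ) : ℂ :=
  ∑' n : ℕ, (∑ m ∈ Finset.Icc 1 (n + 1), ((m : ℂ))⁻¹) * ((n + 1 : ℕ) : ℂ) ^ (-(k : ℤ))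


section RectAux

open Matrix

lemma alt_sum_col {R : Type*} [CommRing R] {n : ℕ} (A : Matrix (Fin n) (Fin (n+1)) R) (i : Fin n) :
    ∑ j : Fin (n+1), (-1 : R)^(j : ℕ) * A i j * (A.submatrix id j.succAbove).det = 0 := by
  have h0 : (Matrix.of (Fin.cons (A i) A) : Matrix (Fin (n+1)) (Fin (n+1)) R).det = 0 := by
    apply Matrix.det_zero_of_row_eq (i := 0) (j := i.succ) (Fin.succ_ne_zero i).symm
    funext j
    simp; rfl
  rw [Matrix.det_succ_row_zero] at h0
  rw [← h0]
  apply Finset.sum_congr rfl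
  intro j _
  have h1 : (Matrix.of (Fin.cons (A i) A) : Matrix (Fin (n+1)) (Fin (n+1)) R) 0 j = A i j := by
    simp; rfl
  have h2 : (Matrix.of (Fin.cons (A i) A) : Matrix (Fin (n+1)) (Fin (n+1)) R).submatrix
      Fin.succ j.succAbove = A.submatrix id j.succAbove := by
    ext a b; simp; rfl
  rw [h1, h2]

lemma plucker_exchange {R : Type*} [CommRing R] {n : ℕ} (A : Matrix (Fin n) (Fin (n+1)) R)
    (B : Matrix (Fin n) (Fin n) R) (k : Fin n) :
    ∑ j : Fin (n+1), (-1:R)^(j:ℕ) * (A.submatrix id j.succAbove).det *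
      (B.updateCol k (fun i => A i j)).det = 0 := by
  have h : ∀ j : Fin (n+1), (B.updateCol k (fun i => A i j)).det
      = Matrix.cramer B (fun i => A i j) k := fun j => (Matrix.cramer_apply _ _ _).symm
  calc ∑ j : Fin (n+1), (-1:R)^(j:ℕ) * (A.submatrix id j.succAbove).det *
      (B.updateCol k (fun i => A i j)).det
      = (∑ j : Fin (n+1), Matrix.cramer B
          (((-1:R)^(j:ℕ) * (A.submatrix id j.succAbove).det) • fun i => A i j)) k := by
        rw [Finset.sum_apply]
        exact Finset.sum_congr rfl fun j _ => by
          rw [h, LinearMap.map_smul]; simp [smul_eq_mul]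
    _ = Matrix.cramer B
          (∑ j : Fin (n+1), ((-1:R)^(j:ℕ) * (A.submatrix id j.succAbove).det) • fun i => A i j) k := by
        rw [map_sum]
    _ = 0 := by
        have hz : (∑ j : Fin (n+1), ((-1:R)^(j:ℕ) * (A.submatrix id j.succAbove).det) • fun i => A i j)
            = (0 : Fin n → R) := by
          funext i
          rw [Finset.sum_apply, Pi.zero_apply]
          rw [← alt_sum_col A i]
          exact Finset.sum_congr rfl fun j _ => by simp [smul_eq_mul]; ring
        rw [hz, map_zero]
        rfl

lemma det_last_col_e {R : Type*} [CommRing R] {m : ℕ} (M : Matrix (Fin (m+1)) (Fin (m+1)) R)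
    (h : ∀ i, M i (Fin.last m) = if i = Fin.last m then 1 else 0) :
    M.det = (M.submatrix Fin.castSucc Fin.castSucc).det := by
  rw [Matrix.det_succ_column M (Fin.last m)]
  rw [Finset.sum_eq_single (Fin.last m)]
  · rw [h, if_pos rfl, Fin.succAbove_last]
    simp only [Fin.val_last, mul_one]
    rw [Even.neg_one_pow ⟨m, rfl⟩, one_mul]
  · intro i _ hi
    rw [h, if_neg hi, mul_zero, zero_mul]
  · simp

lemma coe_succAbove {n : ℕ} (p : Fin (n+1)) (i : Fin n) :
    ((p.succAbove i : Fin (n+1)) : ℕ) = if (i:ℕ) < (p:ℕ) then (i:ℕ) else (i:ℕ)+1 := by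
  rw [Fin.succAbove]
  split_ifs with h1 h2 h3 <;> simp_all [Fin.lt_def]

variable {R : Type*} [CommRing R] {N : ℕ}

/-- The master `r × (r+1)` matrix for the rectangle relation. -/
def Amat (U : Matrix (Fin N) (Fin N) R) (a b s : ℕ) :
    Matrix (Fin (a+s+2+1)) (Fin (a+s+2+1+1)) R :=
  Matrix.of fun i j =>
    if (j:ℕ) ≤ s then matExt U i j
    else if (j:ℕ) ≤ a+s+2 then matExt U i (b + j + 1)
    else if (i:ℕ) = a+s+2 then 1 else 0

/-- The companion `r × r` matrix (with a slot in the last column). -/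
def Bmat (U : Matrix (Fin N) (Fin N) R) (a b s : ℕ) :
    Matrix (Fin (a+s+2+1)) (Fin (a+s+2+1)) R :=
  Matrix.of fun i j =>
    if (j:ℕ) ≤ s+1 then matExt U i j
    else if (j:ℕ) < a+s+2 then matExt U i (b + j + 1)
    else 0

lemma rect_van (U : Matrix (Fin N) (Fin N) R) (a b s : ℕ) (j : Fin (a+s+2+1+1))
    (h1 : (j:ℕ) ≠ s+1) (h2 : (j:ℕ) ≠ a+s+2) (h3 : (j:ℕ) ≠ a+s+3) :
    ((Bmat U a b s).updateCol (Fin.last (a+s+2)) (fun i => Amat U a b s i j)).det = 0 := by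
  have hjlt := j.isLt
  apply Matrix.det_zero_of_column_eq
    (i := (⟨(j:ℕ), by omega⟩ : Fin (a+s+2+1))) (j := Fin.last (a+s+2))
  · simp only [Ne, Fin.ext_iff, Fin.val_last, Fin.val_mk]; omega
  · intro k
    rw [Matrix.updateCol_apply, Matrix.updateCol_apply,
      if_neg (by simp only [Fin.ext_iff, Fin.val_last, Fin.val_mk]; omega), if_pos rfl]
    simp only [Amat, Bmat, Matrix.of_apply, Fin.val_mk]
    split_ifs <;> first | rfl | omega | (exact congrArg₂ _ (by omega) (by omega))

lemma rect_D1 (U : Matrix (Fin N) (Fin N) R) (a b s : ℕ) (j : Fin (a+s+2+1+1))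
    (hj : (j:ℕ) = s+1) :
    ((Amat U a b s).submatrix id j.succAbove).det
      = SchurV U (a+s+2) (rectP (a+1) (b+1+1)) (fun _ => 0) := by
  have hlast : ∀ i, ((Amat U a b s).submatrix id j.succAbove) i (Fin.last (a+s+2))
      = if i = Fin.last (a+s+2) then (1:R) else 0 := by
    intro i
    simp only [Amat, Matrix.submatrix_apply, Matrix.of_apply, id_eq, coe_succAbove, hj,
      Fin.val_last, Fin.ext_iff]
    split_ifs <;> first | rfl | omega
  rw [det_last_col_e _ hlast, SchurV]
  congr 1
  ext i l
  simp only [Amat, Matrix.submatrix_apply, Matrix.of_apply, id_eq, coe_succAbove, hj,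
    Fin.coe_castSucc, maya, rectP, Nat.zero_add, zero_add]
  split_ifs <;> first | rfl | omega | (exact congrArg₂ _ (by omega) (by omega))

lemma rect_D2 (U : Matrix (Fin N) (Fin N) R) (a b s : ℕ) (j : Fin (a+s+2+1+1))
    (hj : (j:ℕ) = a+s+2) :
    ((Amat U a b s).submatrix id j.succAbove).det
      = SchurV U (a+s+2) (rectP (a+1) (b+1)) (fun _ => 0) := by
  have hlast : ∀ i, ((Amat U a b s).submatrix id j.succAbove) i (Fin.last (a+s+2))
      = if i = Fin.last (a+s+2) then (1:R) else 0 := by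
    intro i
    simp only [Amat, Matrix.submatrix_apply, Matrix.of_apply, id_eq, coe_succAbove, hj,
      Fin.val_last, Fin.ext_iff]
    split_ifs <;> first | rfl | omega
  rw [det_last_col_e _ hlast, SchurV]
  congr 1
  ext i l
  simp only [Amat, Matrix.submatrix_apply, Matrix.of_apply, id_eq, coe_succAbove, hj,
    Fin.coe_castSucc, maya, rectP, Nat.zero_add, zero_add]
  split_ifs <;> first | rfl | omega | (exact congrArg₂ _ (by omega) (by omega))

lemma rect_D3 (U : Matrix (Fin N) (Fin N) R) (a b s : ℕ) (j : Fin (a+s+2+1+1))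
    (hj : (j:ℕ) = a+s+3) :
    ((Amat U a b s).submatrix id j.succAbove).det
      = SchurV U (a+s+2+1) (rectP (a+1+1) (b+1)) (fun _ => 0) := by
  rw [SchurV]
  congr 1
  ext i l
  simp only [Amat, Matrix.submatrix_apply, Matrix.of_apply, id_eq, coe_succAbove, hj,
    maya, rectP, Nat.zero_add, zero_add]
  split_ifs <;> first | rfl | omega | (exact congrArg₂ _ (by omega) (by omega))

lemma rect_E2 (U : Matrix (Fin N) (Fin N) R) (a b s : ℕ) (j : Fin (a+s+2+1+1))
    (hj : (j:ℕ) = a+s+2) :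
    ((Bmat U a b s).updateCol (Fin.last (a+s+2)) (fun i => Amat U a b s i j)).det
      = SchurV U (a+s+2+1) (rectP (a+1) (b+1)) (fun _ => 0) := by
  rw [SchurV]
  congr 1
  ext i l
  simp only [Amat, Bmat, Matrix.updateCol_apply, Matrix.of_apply, hj, maya, rectP,
    Fin.ext_iff, Fin.val_last, Nat.zero_add, zero_add]
  split_ifs <;> first | rfl | omega | (exact congrArg₂ _ (by omega) (by omega))

lemma rect_E3 (U : Matrix (Fin N) (Fin N) R) (a b s : ℕ) (j : Fin (a+s+2+1+1))
    (hj : (j:ℕ) = a+s+3) :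
    ((Bmat U a b s).updateCol (Fin.last (a+s+2)) (fun i => Amat U a b s i j)).det
      = SchurV U (a+s+2) (rectP a (b+1)) (fun _ => 0) := by
  have hlast : ∀ i, ((Bmat U a b s).updateCol (Fin.last (a+s+2))
        (fun i => Amat U a b s i j)) i (Fin.last (a+s+2))
      = if i = Fin.last (a+s+2) then (1:R) else 0 := by
    intro i
    rw [Matrix.updateCol_apply, if_pos rfl]
    simp only [Amat, Matrix.of_apply, hj, Fin.ext_iff, Fin.val_last]
    split_ifs <;> first | rfl | omega
  rw [det_last_col_e _ hlast, SchurV]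
  congr 1
  ext i l
  simp only [Amat, Bmat, Matrix.updateCol_apply, Matrix.submatrix_apply, Matrix.of_apply,
    hj, maya, rectP, Fin.ext_iff, Fin.val_last, Fin.coe_castSucc, Nat.zero_add, zero_add]
  split_ifs <;> first | rfl | omega | (exact congrArg₂ _ (by omega) (by omega))

lemma rect_E1 (U : Matrix (Fin N) (Fin N) R) (a b s : ℕ) (j : Fin (a+s+2+1+1))
    (hj : (j:ℕ) = s+1) :
    ((Bmat U a b s).updateCol (Fin.last (a+s+2)) (fun i => Amat U a b s i j)).det
      = (-1:R)^a * SchurV U (a+s+2+1) (rectP (a+1) b) (fun _ => 0) := by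
  classical
  set f : Fin (a+1) ↪ Fin (a+s+2+1) :=
    ⟨fun t => ⟨s+2+(t:ℕ), by omega⟩, fun x y hxy => by
      simp only [Fin.ext_iff, Fin.mk.injEq] at hxy ⊢; omega⟩ with hf
  set σ : Equiv.Perm (Fin (a+s+2+1)) := (finRotate (a+1)).viaFintypeEmbedding f with hσdef
  have hfval : ∀ t : Fin (a+1), ((f t):ℕ) = s+2+(t:ℕ) := fun t => rfl
  have hrot : ∀ t : Fin (a+1), ((finRotate (a+1) t):ℕ) = if (t:ℕ) = a then 0 else (t:ℕ)+1 := by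
    intro t
    rw [finRotate_succ_apply, Fin.val_add_one]
    by_cases hc : t = Fin.last a
    · subst hc; simp [Fin.val_last]
    · rw [if_neg hc, if_neg (fun h => hc (Fin.ext (by rw [Fin.val_last]; exact h)))]
  have hσ : ∀ l : Fin (a+s+2+1), ((σ l):ℕ) =
      if (l:ℕ) < s+2 then (l:ℕ) else if (l:ℕ) < a+s+2 then (l:ℕ)+1 else s+2 := by
    intro l
    by_cases hl : s+2 ≤ (l:ℕ)
    · have hlt := l.isLt
      have h1 : σ l = f (finRotate (a+1) ⟨(l:ℕ)-(s+2), by omega⟩) := by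
        conv_lhs => rw [show l = f ⟨(l:ℕ)-(s+2), by omega⟩ from
          Fin.ext (by rw [hfval]; simp only [Fin.val_mk]; omega)]
        rw [hσdef, Equiv.Perm.viaFintypeEmbedding_apply_image]
      have h2 : ((σ l):ℕ) = s+2 + (if (l:ℕ)-(s+2) = a then 0 else (l:ℕ)-(s+2)+1) := by
        rw [h1, hfval, hrot]
      rw [h2]
      split_ifs <;> omega
    · rw [hσdef, Equiv.Perm.viaFintypeEmbedding_apply_notMem_range, if_pos (by omega)]
      simp only [Set.mem_range, not_exists, hf, Function.Embedding.coeFn_mk, Fin.ext_iff,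
        Fin.val_mk]
      intro t
      have := hfval t
      rw [hf] at this
      omega
  have hperm : (Bmat U a b s).updateCol (Fin.last (a+s+2)) (fun i => Amat U a b s i j)
      = (Matrix.of fun i l : Fin (a+s+2+1) =>
          matExt U i (if (l:ℕ) ≤ s+1 then (l:ℕ) else b+(l:ℕ))).submatrix id σ := by
    ext i l
    simp only [Amat, Bmat, Matrix.updateCol_apply, Matrix.submatrix_apply, Matrix.of_apply,
      id_eq, hσ, hj, Fin.ext_iff, Fin.val_last]
    split_ifs <;> first | rfl | omega | (exact congrArg₂ _ (by omega) (by omega))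
  have hsign : Equiv.Perm.sign σ = (-1 : ℤˣ)^a := by
    rw [hσdef, Equiv.Perm.viaFintypeEmbedding_sign, sign_finRotate, Nat.add_sub_cancel]
  rw [hperm, Matrix.det_permute', hsign]
  have hdet : (Matrix.of fun i l : Fin (a+s+2+1) =>
      matExt U i (if (l:ℕ) ≤ s+1 then (l:ℕ) else b+(l:ℕ))).det
      = SchurV U (a+s+2+1) (rectP (a+1) b) (fun _ => 0) := by
    rw [SchurV]
    congr 1
    ext i l
    simp only [Matrix.of_apply, maya, rectP, Nat.zero_add, zero_add]
    split_ifs <;> first | rfl | omega | (exact congrArg₂ _ (by omega) (by omega))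
  rw [hdet]
  congr 1
  simp [Units.val_pow_eq_pow_val]

end RectAux

/-- Rectangle relation for the ninth variation. -/
theorem rectangle_relation {R : Type*} [CommRing R] {N : ℕ} (hN : 0 < N)
    (U : Matrix (Fin N) (Fin N) R) (hU : UpperUni U)
    (p q r : ℕ) (hp : 1 ≤ p) (hq : 1 ≤ q)
    (hr : p + 1 ≤ r - 1) (hrN : r ≤ N) (hwid : q + 1 ≤ N - r) :
    SchurV U r (rectP (p + 1) q) (fun _ => 0) *
        SchurV U (r - 1) (rectP (p - 1) q) (fun _ => 0) =
      SchurV U r (rectP p q) (fun _ => 0) * SchurV U (r - 1) (rectP p q) (fun _ => 0) -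
        SchurV U r (rectP p (q - 1)) (fun _ => 0) *
          SchurV U (r - 1) (rectP p (q + 1)) (fun _ => 0) := by
  obtain ⟨a, rfl⟩ : ∃ a, p = a + 1 := ⟨p - 1, by omega⟩
  obtain ⟨b, rfl⟩ : ∃ b, q = b + 1 := ⟨q - 1, by omega⟩
  obtain ⟨s, rfl⟩ : ∃ s, r = a + s + 2 + 1 := ⟨r - a - 3, by omega⟩
  simp only [Nat.add_sub_cancel]
  have key := plucker_exchange (Amat U a b s) (Bmat U a b s) (Fin.last (a+s+2))
  set T : Finset (Fin (a+s+2+1+1)) :=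
    {⟨s+1, by omega⟩, ⟨a+s+2, by omega⟩, ⟨a+s+3, by omega⟩} with hT
  have hout : ∀ x ∈ (Finset.univ : Finset (Fin (a+s+2+1+1))), x ∉ T →
      (-1:R)^(x:ℕ) * ((Amat U a b s).submatrix id x.succAbove).det *
        ((Bmat U a b s).updateCol (Fin.last (a+s+2)) (fun i => Amat U a b s i x)).det
        = 0 := by
    intro x _ hx
    simp only [hT, Finset.mem_insert, Finset.mem_singleton, Fin.ext_iff, Fin.val_mk] at hx
    push_neg at hx
    rw [rect_van U a b s x (by omega) (by omega) (by omega), mul_zero]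
  rw [← Finset.sum_subset (Finset.subset_univ T) hout] at key
  have hne1 : (⟨s+1, by omega⟩ : Fin (a+s+2+1+1)) ∉
      ({⟨a+s+2, by omega⟩, ⟨a+s+3, by omega⟩} : Finset (Fin (a+s+2+1+1))) := by
    simp only [Finset.mem_insert, Finset.mem_singleton, Fin.ext_iff, Fin.val_mk]
    omega
  have hne2 : (⟨a+s+2, by omega⟩ : Fin (a+s+2+1+1)) ∉
      ({⟨a+s+3, by omega⟩} : Finset (Fin (a+s+2+1+1))) := by
    simp only [Finset.mem_singleton, Fin.ext_iff, Fin.val_mk]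
    omega
  rw [hT, Finset.sum_insert hne1, Finset.sum_insert hne2, Finset.sum_singleton] at key
  rw [rect_D1 U a b s _ rfl, rect_E1 U a b s _ rfl, rect_D2 U a b s _ rfl,
    rect_E2 U a b s _ rfl, rect_D3 U a b s _ rfl, rect_E3 U a b s _ rfl] at key
  have hv1 : ((⟨s+1, by omega⟩ : Fin (a+s+2+1+1)) : ℕ) = s+1 := rfl
  have hv2 : ((⟨a+s+2, by omega⟩ : Fin (a+s+2+1+1)) : ℕ) = a+s+2 := rfl
  have hv3 : ((⟨a+s+3, by omega⟩ : Fin (a+s+2+1+1)) : ℕ) = a+s+3 := rfl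
  rw [hv1, hv2, hv3] at key
  have h1 : (-1:R)^(a+s+3) * (-1:R)^(s+1) * (-1:R)^a = 1 := by
    rw [← pow_add, ← pow_add]
    exact Even.neg_one_pow ⟨a+s+2, by ring⟩
  have h2 : (-1:R)^(a+s+3) * (-1:R)^(a+s+2) = -1 := by
    rw [← pow_add]
    exact Odd.neg_one_pow ⟨a+s+2, by ring⟩
  have h3 : (-1:R)^(a+s+3) * (-1:R)^(a+s+3) = 1 := by
    rw [← pow_add]
    exact Even.neg_one_pow ⟨a+s+3, by ring⟩
  linear_combination ((-1:R)^(a+s+3)) * key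
    - (SchurV U (a+s+2) (rectP (a+1) (b+1+1)) (fun _ => 0) *
        SchurV U (a+s+2+1) (rectP (a+1) b) (fun _ => 0)) * h1
    - (SchurV U (a+s+2) (rectP (a+1) (b+1)) (fun _ => 0) *
        SchurV U (a+s+2+1) (rectP (a+1) (b+1)) (fun _ => 0)) * h2
    - (SchurV U (a+s+2+1) (rectP (a+1+1) (b+1)) (fun _ => 0) *
        SchurV U (a+s+2) (rectP a (b+1)) (fun _ => 0)) * h3
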